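/- Let μ be a doubling measure on ℝ, φ doubling with ∫_1^∞ φ(t)/t dt < ∞, and f in the Campanato space (p = 1) with seminorm ‖f‖. Then the averages f_B(r) converge to a finite limit σ(f) as r → ∞, and |f_B(r) − σ(f)| ≤ C ‖f‖ ∫_r^∞ φ(t)/t dt for all r > 0. -/

import Mathlib

open Real MeasureTheory Filter

lemma aux_dyadic (u : ℝ) (hu : 1 ≤ u) : ∃ k : ℕ, (2:ℝ)^k ≤ u ∧ u ≤ 2^(k+1) := by
  classical
  have hex : ∃ n : ℕ, u ≤ 2^(n+1) := by
    obtain ⟨n, hn⟩ := pow_unbounded_of_one_lt u (by norm_num : (1:ℝ) < 2)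
    exact ⟨n, le_of_lt (hn.trans_le (by gcongr <;> norm_num))⟩
  refine ⟨Nat.find hex, ?_, Nat.find_spec hex⟩
  rcases Nat.eq_zero_or_pos (Nat.find hex) with h | h
  · simpa [h] using hu
  · have hmin := Nat.find_min hex (m := Nat.find hex - 1) (by omega)
    push_neg at hmin
    have : Nat.find hex - 1 + 1 = Nat.find hex := by omega
    rw [this] at hmin
    exact hmin.le

/-- For a doubling measure μ on ℝ and doubling φ with ∫_1^∞ φ(t)/t dt < ∞, Campanato
functions have convergent averages f_B(r) as r → ∞, with
|f_B(r) − σ(f)| ≤ C N ∫_r^∞ φ(t)/t dt. -/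
theorem campanato_average_limit
    (μ : Measure ℝ) (C₀ : ℝ) (hC₀ : 1 ≤ C₀)
    (hpos : ∀ r : ℝ, 0 < r → 0 < μ (Set.Ioo (-r) r))
    (hfin : ∀ r : ℝ, 0 < r → μ (Set.Ioo (-r) r) < ⊤)
    (hdub : ∀ r : ℝ, 0 < r →
      μ (Set.Ioo (-(2*r)) (2*r)) ≤ ENNReal.ofReal C₀ * μ (Set.Ioo (-r) r))
    (φ : ℝ → ℝ) (Cφ : ℝ) (hCφ : 1 ≤ Cφ) (hφpos : ∀ r, 0 < r → 0 < φ r)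
    (hφ : ∀ r s : ℝ, 0 < r → 0 < s → 1/2 ≤ r / s → r / s ≤ 2 →
      1 / Cφ ≤ φ r / φ s ∧ φ r / φ s ≤ Cφ)
    (hφm : Measurable φ)
    (hφint : IntegrableOn (fun t => φ t / t) (Set.Ioi (1:ℝ)) volume)
    (f : ℝ → ℝ) (hloc : ∀ r : ℝ, 0 < r → IntegrableOn f (Set.Ioo (-r) r) μ)
    (N : ℝ) (hN : 0 ≤ N)
    (hcamp : ∀ r : ℝ, 0 < r →
      (∫ x in Set.Ioo (-r) r,
          |f x - (μ (Set.Ioo (-r) r)).toReal⁻¹ * ∫ y in Set.Ioo (-r) r, f y ∂μ| ∂μ)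
        ≤ N * φ r * (μ (Set.Ioo (-r) r)).toReal) :
    ∃ σf : ℝ,
      Tendsto (fun r : ℝ =>
          (μ (Set.Ioo (-r) r)).toReal⁻¹ * ∫ y in Set.Ioo (-r) r, f y ∂μ) atTop (nhds σf) ∧
      ∃ C : ℝ, 0 < C ∧ ∀ r : ℝ, 0 < r →
        |(μ (Set.Ioo (-r) r)).toReal⁻¹ * (∫ y in Set.Ioo (-r) r, f y ∂μ) - σf|
          ≤ C * N * ∫ t in Set.Ioi r, φ t / t := by
  have hC₀0 : (0:ℝ) < C₀ := lt_of_lt_of_le one_pos hC₀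
  have hCφ0 : (0:ℝ) < Cφ := lt_of_lt_of_le one_pos hCφ
  have hlog2 : (0:ℝ) < Real.log 2 := Real.log_pos one_lt_two
  set g : ℝ → ℝ := fun t => φ t / t with hgdef
  set A : ℝ → ℝ := fun r =>
    (μ (Set.Ioo (-r) r)).toReal⁻¹ * ∫ y in Set.Ioo (-r) r, f y ∂μ with hAdef
  set I : ℝ → ℝ := fun r => ∫ t in Set.Ioi r, g t with hIdef
  set m : ℝ → ℝ := fun r => (μ (Set.Ioo (-r) r)).toReal with hmdef
  -- basic facts
  have hm : ∀ r, 0 < r → 0 < m r := fun r hr =>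
    ENNReal.toReal_pos (hpos r hr).ne' (hfin r hr).ne
  have hsub : ∀ t s : ℝ, t ≤ s → Set.Ioo (-t) t ⊆ Set.Ioo (-s) s := by
    intro t s h
    exact Set.Ioo_subset_Ioo (by linarith) h
  have hdub' : ∀ t s : ℝ, 0 < t → t ≤ s → s ≤ 2*t → m s ≤ C₀ * m t := by
    intro t s ht hts hs2
    have h1 : μ (Set.Ioo (-s) s) ≤ ENNReal.ofReal C₀ * μ (Set.Ioo (-t) t) :=
      le_trans (measure_mono (hsub s (2*t) hs2)) (hdub t ht)
    have h2 : ENNReal.ofReal C₀ * μ (Set.Ioo (-t) t) ≠ ⊤ :=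
      ENNReal.mul_ne_top ENNReal.ofReal_ne_top (hfin t ht).ne
    have := ENNReal.toReal_mono h2 h1
    rwa [ENNReal.toReal_mul, ENNReal.toReal_ofReal hC₀0.le] at this
  have hφcomp : ∀ t s : ℝ, 0 < t → t ≤ s → s ≤ 2*t → φ s ≤ Cφ * φ t := by
    intro t s ht hts hs2
    have hs : 0 < s := lt_of_lt_of_le ht hts
    have h12 : (1:ℝ)/2 ≤ s / t := by rw [le_div_iff₀ ht]; linarith
    have h2 : s / t ≤ 2 := by rw [div_le_iff₀ ht]; linarith
    have h := (hφ s t hs ht h12 h2).2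
    rw [div_le_iff₀ (hφpos t ht)] at h
    linarith
  -- Step lemma: comparable radii
  have step : ∀ t s : ℝ, 0 < t → t ≤ s → s ≤ 2*t →
      |A t - A s| ≤ C₀ * Cφ * N * φ t := by
    intro t s ht hts hs2
    have hs : 0 < s := lt_of_lt_of_le ht hts
    have hintt : IntegrableOn f (Set.Ioo (-t) t) μ := hloc t ht
    have hints : IntegrableOn f (Set.Ioo (-s) s) μ := hloc s hs
    have hconst_t : IntegrableOn (fun _ : ℝ => A s) (Set.Ioo (-t) t) μ :=
      integrableOn_const (hfin t ht).ne
    have hconst_s : IntegrableOn (fun _ : ℝ => A s) (Set.Ioo (-s) s) μ :=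
      integrableOn_const (hfin s hs).ne
    have key : A t - A s = (m t)⁻¹ * ∫ x in Set.Ioo (-t) t, (f x - A s) ∂μ := by
      rw [integral_sub hintt hconst_t, setIntegral_const, smul_eq_mul]
      have hmt : m t ≠ 0 := (hm t ht).ne'
      simp only [hAdef, hmdef, measureReal_def]
      field_simp
      have hmt' : (μ (Set.Ioo (-t) t)).toReal ≠ 0 := hmt
      rw [sub_div, mul_div_assoc, mul_div_cancel_left₀ _ hmt']
    have h1 : |A t - A s| ≤ (m t)⁻¹ * ∫ x in Set.Ioo (-t) t, |f x - A s| ∂μ := by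
      rw [key, abs_mul, abs_of_nonneg (inv_nonneg.2 (hm t ht).le)]
      refine mul_le_mul_of_nonneg_left ?_ (inv_nonneg.2 (hm t ht).le)
      simpa [Real.norm_eq_abs] using
        (norm_integral_le_integral_norm (μ := μ.restrict (Set.Ioo (-t) t))
          (fun x => f x - A s))
    have h2 : (∫ x in Set.Ioo (-t) t, |f x - A s| ∂μ)
        ≤ ∫ x in Set.Ioo (-s) s, |f x - A s| ∂μ := by
      apply setIntegral_mono_set ((hints.sub hconst_s).abs)
      · exact Filter.Eventually.of_forall fun x => abs_nonneg _
      · exact HasSubset.Subset.eventuallyLE (hsub t s hts)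
    have h3 : (∫ x in Set.Ioo (-s) s, |f x - A s| ∂μ) ≤ N * φ s * m s := hcamp s hs
    have h4 : |A t - A s| ≤ (m t)⁻¹ * (N * φ s * m s) :=
      h1.trans (mul_le_mul_of_nonneg_left (h2.trans h3) (inv_nonneg.2 (hm t ht).le))
    refine h4.trans ?_
    have hx : N * φ s * m s ≤ (C₀ * Cφ * N * φ t) * m t := by
      nlinarith [hφcomp t s ht hts hs2, hdub' t s ht hts hs2, hφpos s hs, hφpos t ht,
        hm s hs, hm t ht, mul_le_mul (hφcomp t s ht hts hs2) (hdub' t s ht hts hs2)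
          (hm s hs).le (mul_nonneg hCφ0.le (hφpos t ht).le)]
    calc (m t)⁻¹ * (N * φ s * m s) ≤ (m t)⁻¹ * ((C₀ * Cφ * N * φ t) * m t) :=
          mul_le_mul_of_nonneg_left hx (inv_nonneg.2 (hm t ht).le)
      _ = C₀ * Cφ * N * φ t := by
          field_simp
          rw [mul_assoc, mul_div_cancel_left₀ _ (hm t ht).ne']
  -- measurability & integrability of g
  have hgm : Measurable g := hφm.div measurable_id
  have hgnonneg : ∀ t : ℝ, 0 < t → 0 ≤ g t := fun t ht =>
    div_nonneg (hφpos t ht).le ht.le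
  have hgIoc : ∀ a : ℝ, 0 < a → IntegrableOn g (Set.Ioc a (2*a)) volume := by
    intro a ha
    apply Measure.integrableOn_of_bounded (M := Cφ * φ a / a) measure_Ioc_lt_top.ne
      hgm.aestronglyMeasurable
    rw [ae_restrict_iff' measurableSet_Ioc]
    refine Filter.Eventually.of_forall fun t ht => ?_
    have hta : a < t := ht.1
    have ht0 : 0 < t := ha.trans hta
    rw [Real.norm_eq_abs, abs_of_nonneg (hgnonneg t ht0)]
    exact div_le_div₀ (mul_nonneg hCφ0.le (hφpos a ha).le)
      (hφcomp a t ha hta.le ht.2) ha hta.le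
  have hgIoi : ∀ r : ℝ, 0 < r → IntegrableOn g (Set.Ioi r) volume := by
    have key : ∀ n : ℕ, IntegrableOn g (Set.Ioi (((2:ℝ)^n)⁻¹)) volume := by
      intro n
      induction n with
      | zero => simpa using hφint
      | succ n ih =>
        have hpow : (0:ℝ) < ((2:ℝ)^(n+1))⁻¹ := by positivity
        have heq : ((2:ℝ)^n)⁻¹ = 2 * ((2:ℝ)^(n+1))⁻¹ := by
          rw [pow_succ]; field_simp
        have hle : ((2:ℝ)^(n+1))⁻¹ ≤ ((2:ℝ)^n)⁻¹ := by
          rw [heq]; linarith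
        rw [← Set.Ioc_union_Ioi_eq_Ioi hle]
        refine IntegrableOn.union ?_ ih
        have := hgIoc (((2:ℝ)^(n+1))⁻¹) hpow
        rwa [← heq] at this
    intro r hr
    obtain ⟨n, hn⟩ := pow_unbounded_of_one_lt r⁻¹ (by norm_num : (1:ℝ) < 2)
    have : ((2:ℝ)^n)⁻¹ ≤ r := by
      rw [inv_le_comm₀ (by positivity) hr]
      exact hn.le
    exact (key n).mono_set (Set.Ioi_subset_Ioi this)
  have hInonneg : ∀ r : ℝ, 0 < r → 0 ≤ I r := by
    intro r hr
    exact setIntegral_nonneg measurableSet_Ioi fun t ht => hgnonneg t (hr.trans ht)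
  have hgae : ∀ r : ℝ, 0 < r → (0 : ℝ → ℝ) ≤ᶠ[ae (volume.restrict (Set.Ioi r))] g := by
    intro r hr
    filter_upwards [ae_restrict_mem measurableSet_Ioi] with t ht
    exact hgnonneg t (hr.trans ht)
  have hIanti : ∀ r s : ℝ, 0 < r → r ≤ s → I s ≤ I r := by
    intro r s hr hrs
    apply setIntegral_mono_set (hgIoi r hr) (hgae r hr)
    exact HasSubset.Subset.eventuallyLE (Set.Ioi_subset_Ioi hrs)
  -- interval integral facts
  have hgII : ∀ r a b : ℝ, 0 < r → r ≤ a → a ≤ b → IntervalIntegrable g volume a b := by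
    intro r a b hr hra hab
    rw [intervalIntegrable_iff_integrableOn_Ioc_of_le hab]
    exact (hgIoi r hr).mono_set fun t ht => lt_of_le_of_lt hra ht.1
  have hIocIoi : ∀ r a b : ℝ, 0 < r → r ≤ a → a ≤ b → (∫ t in a..b, g t) ≤ I r := by
    intro r a b hr hra hab
    rw [intervalIntegral.integral_of_le hab]
    apply setIntegral_mono_set (hgIoi r hr) (hgae r hr)
    exact HasSubset.Subset.eventuallyLE fun t ht => lt_of_le_of_lt hra ht.1
  -- φ a controlled by integral of g over (a, 2a]
  have hφI : ∀ a : ℝ, 0 < a → φ a ≤ (Cφ / Real.log 2) * ∫ t in a..(2*a), g t := by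
    intro a ha
    have ha2 : a ≤ 2*a := by linarith
    have h0 : (0:ℝ) ∉ Set.uIcc a (2*a) := by
      rw [Set.uIcc_of_le ha2]
      intro h
      exact absurd h.1 (by linarith)
    have h1 : ∫ t in a..(2*a), φ a * (1/t) = φ a * Real.log 2 := by
      rw [intervalIntegral.integral_const_mul, integral_one_div h0]
      congr 1
      rw [mul_div_assoc, div_self ha.ne']
      norm_num
    have hII1 : IntervalIntegrable (fun t => φ a * (1/t)) volume a (2*a) := by
      apply ContinuousOn.intervalIntegrable
      apply ContinuousOn.mul continuousOn_const
      apply ContinuousOn.div continuousOn_const continuousOn_id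
      intro x hx
      rw [Set.uIcc_of_le ha2] at hx
      exact ne_of_gt (lt_of_lt_of_le ha hx.1)
    have hII2 : IntervalIntegrable (fun t => Cφ * g t) volume a (2*a) :=
      (hgII a a (2*a) ha le_rfl ha2).const_mul Cφ
    have h2 : ∫ t in a..(2*a), φ a * (1/t) ≤ ∫ t in a..(2*a), Cφ * g t := by
      apply intervalIntegral.integral_mono_on ha2 hII1 hII2
      intro x hx
      have hx0 : 0 < x := lt_of_lt_of_le ha hx.1
      have h12 : (1:ℝ)/2 ≤ a / x := by rw [le_div_iff₀ hx0]; linarith [hx.2]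
      have h22 : a / x ≤ 2 := by rw [div_le_iff₀ hx0]; linarith [hx.1]
      have hφx : φ a ≤ Cφ * φ x := by
        have h := (hφ a x ha hx0 h12 h22).2
        rw [div_le_iff₀ (hφpos x hx0)] at h
        exact h
      calc φ a * (1/x) = φ a / x := by ring
        _ ≤ Cφ * φ x / x := by gcongr
        _ = Cφ * g x := by rw [hgdef]; ring
    rw [h1, intervalIntegral.integral_const_mul] at h2
    rw [div_mul_eq_mul_div, le_div_iff₀ hlog2]
    linarith [h2]
  have hφI' : ∀ a : ℝ, 0 < a → φ a ≤ (Cφ / Real.log 2) * I a := by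
    intro a ha
    exact (hφI a ha).trans (mul_le_mul_of_nonneg_left
      (hIocIoi a a (2*a) ha le_rfl (by linarith)) (by positivity))
  set K : ℝ := C₀ * Cφ * (Cφ / Real.log 2) with hKdef
  have hK : 0 < K := by positivity
  -- dyadic telescoping
  have dyadic : ∀ r : ℝ, 0 < r → ∀ k : ℕ,
      |A r - A ((2:ℝ)^k * r)| ≤ K * N * ∫ t in r..((2:ℝ)^k * r), g t := by
    intro r hr k
    induction k with
    | zero => simp
    | succ k ih =>
      have hpk : (1:ℝ) ≤ (2:ℝ)^k := one_le_pow₀ (by norm_num)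
      have hrk : 0 < (2:ℝ)^k * r := by positivity
      have hrrk : r ≤ (2:ℝ)^k * r := le_mul_of_one_le_left hr.le hpk
      have heq : (2:ℝ)^(k+1) * r = 2 * ((2:ℝ)^k * r) := by ring
      have hstep : |A ((2:ℝ)^k * r) - A ((2:ℝ)^(k+1) * r)| ≤ C₀ * Cφ * N * φ ((2:ℝ)^k * r) := by
        rw [heq]
        exact step ((2:ℝ)^k * r) (2 * ((2:ℝ)^k * r)) hrk (by linarith) le_rfl
      have hstep2 : C₀ * Cφ * N * φ ((2:ℝ)^k * r)
          ≤ K * N * ∫ t in ((2:ℝ)^k * r)..((2:ℝ)^(k+1) * r), g t := by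
        have := hφI ((2:ℝ)^k * r) hrk
        rw [heq]
        calc C₀ * Cφ * N * φ ((2:ℝ)^k * r)
            ≤ C₀ * Cφ * N * ((Cφ / Real.log 2) * ∫ t in ((2:ℝ)^k * r)..(2*((2:ℝ)^k * r)), g t) :=
              mul_le_mul_of_nonneg_left this
                (mul_nonneg (mul_nonneg hC₀0.le hCφ0.le) hN)
          _ = K * N * ∫ t in ((2:ℝ)^k * r)..(2*((2:ℝ)^k * r)), g t := by rw [hKdef]; ring
      have hadd : (∫ t in r..((2:ℝ)^k * r), g t) + ∫ t in ((2:ℝ)^k * r)..((2:ℝ)^(k+1) * r), g t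
          = ∫ t in r..((2:ℝ)^(k+1) * r), g t := by
        apply intervalIntegral.integral_add_adjacent_intervals
        · exact hgII r r ((2:ℝ)^k * r) hr le_rfl hrrk
        · refine hgII r ((2:ℝ)^k * r) ((2:ℝ)^(k+1) * r) hr hrrk ?_
          rw [heq]; linarith
      calc |A r - A ((2:ℝ)^(k+1) * r)|
          ≤ |A r - A ((2:ℝ)^k * r)| + |A ((2:ℝ)^k * r) - A ((2:ℝ)^(k+1) * r)| := by
            have := abs_sub_le (A r) (A ((2:ℝ)^k * r)) (A ((2:ℝ)^(k+1) * r))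
            linarith
        _ ≤ K * N * (∫ t in r..((2:ℝ)^k * r), g t)
            + K * N * ∫ t in ((2:ℝ)^k * r)..((2:ℝ)^(k+1) * r), g t :=
            add_le_add ih (hstep.trans hstep2)
        _ = K * N * ∫ t in r..((2:ℝ)^(k+1) * r), g t := by rw [← hadd]; ring
  have dyadic' : ∀ r : ℝ, 0 < r → ∀ k : ℕ, |A r - A ((2:ℝ)^k * r)| ≤ K * N * I r := by
    intro r hr k
    refine (dyadic r hr k).trans ?_
    have := hIocIoi r r ((2:ℝ)^k * r) hr le_rfl (le_mul_of_one_le_left hr.le (one_le_pow₀ (by norm_num)))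
    exact mul_le_mul_of_nonneg_left this (mul_nonneg hK.le hN)
  -- master estimate
  have master : ∀ r s : ℝ, 0 < r → r ≤ s → |A r - A s| ≤ 2 * K * N * I r := by
    intro r s hr hrs
    have hs : 0 < s := lt_of_lt_of_le hr hrs
    have hu : 1 ≤ s / r := (one_le_div hr).2 hrs
    obtain ⟨k, hk1, hk2⟩ := aux_dyadic (s / r) hu
    have hk1' : (2:ℝ)^k * r ≤ s := by
      rw [le_div_iff₀ hr] at hk1
      exact hk1
    have hk2' : s ≤ 2 * ((2:ℝ)^k * r) := by
      have h2k : s / r ≤ 2 * (2:ℝ)^k := by rw [pow_succ] at hk2; linarith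
      rw [div_le_iff₀ hr] at h2k
      linarith
    have hrk : 0 < (2:ℝ)^k * r := by positivity
    have hrrk : r ≤ (2:ℝ)^k * r :=
      le_mul_of_one_le_left hr.le (one_le_pow₀ (by norm_num))
    have h1 : |A r - A ((2:ℝ)^k * r)| ≤ K * N * I r := dyadic' r hr k
    have h2 : |A ((2:ℝ)^k * r) - A s| ≤ C₀ * Cφ * N * φ ((2:ℝ)^k * r) :=
      step ((2:ℝ)^k * r) s hrk hk1' hk2'
    have h3 : C₀ * Cφ * N * φ ((2:ℝ)^k * r) ≤ K * N * I r := by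
      have ha := hφI' ((2:ℝ)^k * r) hrk
      have hb := hIanti r ((2:ℝ)^k * r) hr hrrk
      have hc : φ ((2:ℝ)^k * r) ≤ (Cφ / Real.log 2) * I r :=
        ha.trans (mul_le_mul_of_nonneg_left hb (by positivity))
      calc C₀ * Cφ * N * φ ((2:ℝ)^k * r) ≤ C₀ * Cφ * N * ((Cφ / Real.log 2) * I r) :=
            mul_le_mul_of_nonneg_left hc (mul_nonneg (mul_nonneg hC₀0.le hCφ0.le) hN)
        _ = K * N * I r := by rw [hKdef]; ring
    calc |A r - A s| ≤ |A r - A ((2:ℝ)^k * r)| + |A ((2:ℝ)^k * r) - A s| := by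
          have := abs_sub_le (A r) (A ((2:ℝ)^k * r)) (A s)
          linarith
      _ ≤ K * N * I r + K * N * I r := add_le_add h1 (h2.trans h3)
      _ = 2 * K * N * I r := by ring
  -- I tends to 0
  have hIto0 : Tendsto I atTop (nhds 0) := by
    have hsplit : ∀ r : ℝ, 1 ≤ r → I r = I 1 - ∫ t in (1:ℝ)..r, g t := by
      intro r hr1
      have hunion : Set.Ioc (1:ℝ) r ∪ Set.Ioi r = Set.Ioi (1:ℝ) :=
        Set.Ioc_union_Ioi_eq_Ioi hr1
      have hdisj : Disjoint (Set.Ioc (1:ℝ) r) (Set.Ioi r) := by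
        apply Set.disjoint_left.2
        intro x hx hx'
        exact absurd hx.2 (not_le.2 hx')
      have h1 : IntegrableOn g (Set.Ioc (1:ℝ) r) volume :=
        hφint.mono_set fun t ht => ht.1
      have h2 : IntegrableOn g (Set.Ioi r) volume :=
        hφint.mono_set (Set.Ioi_subset_Ioi hr1)
      have := setIntegral_union hdisj measurableSet_Ioi h1 h2
      rw [hunion] at this
      rw [intervalIntegral.integral_of_le hr1]
      have hI1 : I 1 = (∫ t in Set.Ioc (1:ℝ) r, g t) + ∫ t in Set.Ioi r, g t := this
      rw [hIdef]
      simp only []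
      linarith [hI1]
    have htend : Tendsto (fun r : ℝ => ∫ t in (1:ℝ)..r, g t) atTop (nhds (I 1)) :=
      intervalIntegral_tendsto_integral_Ioi 1 hφint tendsto_id
    have : Tendsto (fun r : ℝ => I 1 - ∫ t in (1:ℝ)..r, g t) atTop (nhds (I 1 - I 1)) :=
      tendsto_const_nhds.sub htend
    rw [sub_self] at this
    apply this.congr'
    filter_upwards [eventually_ge_atTop (1:ℝ)] with r hr
    exact (hsplit r hr).symm
  -- Cauchy sequence of dyadic averages
  have hpowtend : Tendsto (fun n : ℕ => (2:ℝ)^n) atTop atTop :=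
    tendsto_pow_atTop_atTop_of_one_lt one_lt_two
  have hbtend : Tendsto (fun n : ℕ => 2 * K * N * I ((2:ℝ)^n)) atTop (nhds 0) := by
    have := (hIto0.comp hpowtend).const_mul (2 * K * N)
    simpa using this
  have hcauchy : CauchySeq (fun n : ℕ => A ((2:ℝ)^n)) := by
    apply cauchySeq_of_le_tendsto_0 (fun n : ℕ => 2 * K * N * I ((2:ℝ)^n)) _ hbtend
    intro n mm j hn hm
    have hkey : ∀ p q : ℕ, p ≤ q → dist (A ((2:ℝ)^p)) (A ((2:ℝ)^q)) ≤ 2 * K * N * I ((2:ℝ)^p) := by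
      intro p q hpq
      rw [Real.dist_eq]
      exact master ((2:ℝ)^p) ((2:ℝ)^q) (by positivity)
        (pow_le_pow_right₀ (by norm_num) hpq)
    have hanti : ∀ p : ℕ, j ≤ p → I ((2:ℝ)^p) ≤ I ((2:ℝ)^j) := fun p hp =>
      hIanti ((2:ℝ)^j) ((2:ℝ)^p) (by positivity) (pow_le_pow_right₀ (by norm_num) hp)
    have hKN : (0:ℝ) ≤ 2 * K * N := mul_nonneg (by linarith) hN
    rcases le_total n mm with h | h
    · exact (hkey n mm h).trans (mul_le_mul_of_nonneg_left (hanti n hn) hKN)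
    · rw [dist_comm]
      exact (hkey mm n h).trans (mul_le_mul_of_nonneg_left (hanti mm hm) hKN)
  obtain ⟨σ, hσ⟩ := cauchySeq_tendsto_of_complete hcauchy
  -- final bound
  have final : ∀ r : ℝ, 0 < r → |A r - σ| ≤ 2 * K * N * I r := by
    intro r hr
    have h1 : Tendsto (fun n : ℕ => |A r - A ((2:ℝ)^n)|) atTop (nhds |A r - σ|) :=
      ((tendsto_const_nhds.sub hσ).abs)
    apply le_of_tendsto h1
    have hev : ∀ᶠ n : ℕ in atTop, r ≤ (2:ℝ)^n :=
      hpowtend.eventually_ge_atTop r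
    filter_upwards [hev] with n hn
    exact master r ((2:ℝ)^n) hr hn
  refine ⟨σ, ?_, 2 * K, by positivity, ?_⟩
  · rw [tendsto_iff_dist_tendsto_zero]
    have hb2 : Tendsto (fun r : ℝ => 2 * K * N * I r) atTop (nhds 0) := by
      have := hIto0.const_mul (2 * K * N)
      simpa using this
    apply squeeze_zero' ?_ ?_ hb2
    · exact Filter.Eventually.of_forall fun r => dist_nonneg
    · filter_upwards [eventually_gt_atTop (0:ℝ)] with r hr
      rw [Real.dist_eq]
      exact final r hr
  · intro r hr
    have := final r hr
    calc |A r - σ| ≤ 2 * K * N * I r := final r hr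
      _ = 2 * K * N * ∫ t in Set.Ioi r, φ t / t := rfl
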